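/- Let D₁ and D₂ be real symmetric positive semi-definite 3×3 matrices. If the orientationally-averaged signals for rank-1 measurement tensors agree for all strengths, i.e. S̄(D₁, diag(d,0,0)) = S̄(D₂, diag(d,0,0)) for every d ≥ 0, then D₁ and D₂ have the same characteristic polynomial, i.e. the same eigenvalues with multiplicity. -/

import Mathlib

open Matrix MeasureTheory

noncomputable section

abbrev Mat3 := Matrix (Fin 3) (Fin 3) ℝ

/-- The special orthogonal group SO(3) as a submonoid of 3×3 real matrices:
matrices `R` with `Rᵀ * R = 1` and `det R = 1`. -/
def SO3 : Submonoid Mat3 where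
  carrier := {R | Rᵀ * R = 1 ∧ R.det = 1}
  one_mem' := ⟨by simp, by simp⟩
  mul_mem' := by
    rintro A B ⟨hA1, hA2⟩ ⟨hB1, hB2⟩
    refine ⟨?_, by rw [Matrix.det_mul, hA2, hB2, one_mul]⟩
    rw [Matrix.transpose_mul, Matrix.mul_assoc, ← Matrix.mul_assoc Aᵀ, hA1, Matrix.one_mul, hB1]

instance : Group SO3 :=
  { (inferInstance : Monoid SO3) with
    inv := fun A => ⟨A.1ᵀ, by
      refine ⟨?_, by rw [Matrix.det_transpose]; exact A.2.2⟩
      rw [Matrix.transpose_transpose, mul_eq_one_comm]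
      exact A.2.1⟩
    inv_mul_cancel := fun A => Subtype.ext A.2.1 }

instance : IsTopologicalGroup SO3 where
  continuous_mul := Continuous.subtype_mk
    (((continuous_subtype_val.comp continuous_fst).matrix_mul
      (continuous_subtype_val.comp continuous_snd))) _
  continuous_inv := Continuous.subtype_mk continuous_subtype_val.matrix_transpose _

theorem SO3_isCompact : IsCompact (SO3 : Set Mat3) := by
  have hsub : (SO3 : Set Mat3) ⊆
      Set.univ.pi (fun _ : Fin 3 => Set.univ.pi fun _ : Fin 3 => Set.Icc (-1:ℝ) 1) := by
    rintro R ⟨hR1, -⟩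
    refine Set.mem_univ_pi.mpr fun i => Set.mem_univ_pi.mpr fun j => ?_
    have h1 : (Rᵀ * R) j j = (1 : Mat3) j j := by rw [hR1]
    have h2 : ∑ k, R k j ^ 2 = 1 := by
      simpa [Matrix.mul_apply, Matrix.transpose_apply, Matrix.one_apply, sq] using h1
    have h3 : R i j ^ 2 ≤ 1 := by
      rw [← h2]
      exact Finset.single_le_sum (fun k _ => sq_nonneg (R k j)) (Finset.mem_univ i)
    exact Set.mem_Icc.mpr (abs_le.mp ((sq_le_one_iff_abs_le_one (a := R i j)).mp h3))
  exact IsCompact.of_isClosed_subset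
    (isCompact_univ_pi fun _ => isCompact_univ_pi fun _ => isCompact_Icc)
    (IsClosed.inter
      (isClosed_singleton.preimage (continuous_id.matrix_transpose.matrix_mul continuous_id))
      (isClosed_singleton.preimage continuous_id.matrix_det))
    hsub

instance : CompactSpace SO3 := isCompact_iff_compactSpace.mp SO3_isCompact

instance : MeasurableSpace SO3 := borel _
instance : BorelSpace SO3 := ⟨rfl⟩

/-- The Haar probability measure on the compact group SO(3)
(normalized so that the whole group has measure 1). -/
def μSO3 : Measure SO3 := Measure.haarMeasure ⊤

/-- The orientationally-averaged signal
`S̄(D,B) = ∫_{SO(3)} exp(−tr(D·R·B·Rᵀ)) dμ(R)`. -/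
def Sbar (D B : Mat3) : ℝ :=
  ∫ R : SO3, Real.exp (-(D * R.1 * B * R.1ᵀ).trace) ∂μSO3

/-- `dg a b c` is the diagonal 3×3 matrix with diagonal entries `a`, `b`, `c`. -/
def dg (x y z : ℝ) : Mat3 := Matrix.diagonal ![x, y, z]

/-- The error function `erf x = (2/√π) ∫₀ˣ exp(−t²) dt`. -/
def erf (x : ℝ) : ℝ := (2 / Real.sqrt Real.pi) * ∫ t in (0:ℝ)..x, Real.exp (-t^2)

/-- The rising factorial (Pochhammer symbol) `(q)ₖ = q(q+1)⋯(q+k−1)`. -/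
def poch (q : ℝ) (k : ℕ) : ℝ := (ascPochhammer ℝ k).eval q

/-- The Gauss hypergeometric polynomial `₂F₁(1/2, −n; 1; x) = ∑_{k=0}^n ((1/2)ₖ(−n)ₖ/((1)ₖ k!)) xᵏ`. -/
def F21half (n : ℕ) (x : ℝ) : ℝ :=
  ∑ k ∈ Finset.range (n+1),
    (poch (1/2) k * poch (-(n:ℝ)) k) / (poch 1 k * (Nat.factorial k)) * x^k

/-- The confluent hypergeometric function `₁F₁(α; β; x) = ∑ₖ ((α)ₖ/(β)ₖ) xᵏ/k!`. -/
def F11 (α β x : ℝ) : ℝ := ∑' k : ℕ, (poch α k / poch β k) * x^k / (Nat.factorial k)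

/-- The modified Bessel function of the first kind of integer order `m`:
`I_m(x) = ∑ⱼ (x/2)^{m+2j}/(j!(m+j)!)`. -/
def besselI (m : ℕ) (x : ℝ) : ℝ :=
  ∑' j : ℕ, (x/2)^(m+2*j) / ((Nat.factorial j) * (Nat.factorial (m+j)))

/-- The regularized Gauss hypergeometric function
`₂F̃₁(α, β; γ; x) = ∑ₖ (α)ₖ(β)ₖ xᵏ/(Γ(γ+k) k!)`, with `1/Γ` vanishing at nonpositive integers
(note `Real.Gamma` is defined to be `0` there, and `x/0 = 0` in Lean). -/
def regF21 (α β γ x : ℝ) : ℝ :=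
  ∑' k : ℕ, (poch α k * poch β k) * x^k / (Real.Gamma (γ + k) * (Nat.factorial k))

end

noncomputable section Aux
open Matrix MeasureTheory

instance : IsProbabilityMeasure μSO3 := by
  constructor
  rw [μSO3, ← TopologicalSpace.PositiveCompacts.coe_top (α := SO3)]
  exact Measure.haarMeasure_self

instance : μSO3.IsMulLeftInvariant := by
  rw [μSO3]; infer_instance

lemma integrable_cont {f : SO3 → ℝ} (hf : Continuous f) : Integrable f μSO3 :=
  hf.integrable_of_hasCompactSupport (HasCompactSupport.of_compactSpace f)

lemma integral_comp_smul (g : SO3) (f : SO3 → ℝ) :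
    ∫ R, f (g * R) ∂μSO3 = ∫ R, f R ∂μSO3 :=
  integral_mul_left_eq_self f g

/-- first column of a rotation -/
def ucol (R : SO3) : Fin 3 → ℝ := fun i => R.1 i 0

lemma continuous_col_i (i : Fin 3) : Continuous (fun R => ucol R i) :=
  (continuous_apply (0 : Fin 3)).comp ((continuous_apply i).comp continuous_subtype_val)

def q (D : Mat3) (R : SO3) : ℝ := ∑ i, ∑ j, D i j * ucol R i * ucol R j

lemma continuous_q (D : Mat3) : Continuous (q D) := by
  unfold q
  exact continuous_finset_sum _ fun i _ => continuous_finset_sum _ fun j _ =>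
    (continuous_const.mul (continuous_col_i i)).mul (continuous_col_i j)

lemma trace_eq (D : Mat3) (d : ℝ) (R : SO3) :
    (D * R.1 * dg d 0 0 * R.1ᵀ).trace = d * q D R := by
  simp [Matrix.trace, Matrix.mul_apply, dg, Matrix.diagonal, Fin.sum_univ_three, q, ucol,
    Matrix.transpose_apply]
  ring

lemma col_norm (R : SO3) : ucol R 0 ^ 2 + ucol R 1 ^ 2 + ucol R 2 ^ 2 = 1 := by
  have h := R.2.1
  have h2 := congrFun (congrFun h 0) 0
  simpa [Matrix.mul_apply, Fin.sum_univ_three, Matrix.transpose_apply, Matrix.one_apply, ucol, sq]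
    using h2

lemma ucol_mul (g R : SO3) (i : Fin 3) :
    ucol (g * R) i = g.1 i 0 * ucol R 0 + g.1 i 1 * ucol R 1 + g.1 i 2 * ucol R 2 := by
  simp [ucol, Matrix.mul_apply, Fin.sum_univ_three]

end Aux
noncomputable section Aux2
open Matrix MeasureTheory

lemma coeffs_zero (c : ℕ → ℝ) (K C : ℝ) (hK : 0 ≤ K) (hC : 0 ≤ C)
    (hb : ∀ n, |c n| ≤ K * C ^ n / n.factorial)
    (h : ∀ d : ℝ, 0 < d → d ≤ 1 → HasSum (fun n => c n * d ^ n) 0) : ∀ n, c n = 0 := by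
  intro n
  induction n using Nat.strong_induction_on with
  | _ n ih =>
  set S₀ : ℝ := ∑' k : ℕ, K * C ^ (k + (n+1)) / (k + (n+1)).factorial with hS₀
  have hsum : Summable (fun k : ℕ => K * C ^ (k + (n+1)) / (k + (n+1)).factorial) := by
    have h1 : Summable (fun m : ℕ => K * (C ^ m / m.factorial)) :=
      (Real.summable_pow_div_factorial C).mul_left K
    have h2 := (summable_nat_add_iff (f := fun m : ℕ => K * (C ^ m / m.factorial)) (n+1)).mpr h1
    simpa [mul_div_assoc] using h2
  have hS₀nonneg : 0 ≤ S₀ := by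
    apply tsum_nonneg
    intro k
    positivity
  have key : ∀ d : ℝ, 0 < d → d ≤ 1 → |c n| ≤ d * S₀ := by
    intro d hd hd1
    have hs := h d hd hd1
    have htail : HasSum (fun k : ℕ => c (k + (n+1)) * d ^ (k + (n+1)))
        (0 - ∑ m ∈ Finset.range (n+1), c m * d ^ m) := by
      exact (hasSum_nat_add_iff (f := fun m => c m * d ^ m) (n+1)).mpr (by simpa using hs)
    have hrange : ∑ m ∈ Finset.range (n+1), c m * d ^ m = c n * d ^ n := by
      rw [Finset.sum_range_succ]
      have : ∀ m ∈ Finset.range n, c m * d ^ m = 0 := by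
        intro m hm
        rw [ih m (Finset.mem_range.mp hm), zero_mul]
      rw [Finset.sum_eq_zero this, zero_add]
    rw [hrange, zero_sub] at htail
    -- bound the tail
    have hbd : ∀ k : ℕ, |c (k + (n+1)) * d ^ (k + (n+1))|
        ≤ d ^ (n+1) * (K * C ^ (k + (n+1)) / (k + (n+1)).factorial) := by
      intro k
      rw [abs_mul, abs_pow, abs_of_pos hd]
      have h1 : d ^ (k + (n+1)) ≤ d ^ (n+1) := by
        calc d ^ (k + (n+1)) = d ^ k * d ^ (n+1) := by rw [pow_add]
        _ ≤ 1 * d ^ (n+1) := by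
            apply mul_le_mul_of_nonneg_right (pow_le_one₀ hd.le hd1) (by positivity)
        _ = d ^ (n+1) := one_mul _
      calc |c (k + (n+1))| * d ^ (k + (n+1))
          ≤ (K * C ^ (k + (n+1)) / (k + (n+1)).factorial) * d ^ (n+1) := by
            apply mul_le_mul (hb _) h1 (by positivity)
            positivity
        _ = d ^ (n+1) * (K * C ^ (k + (n+1)) / (k + (n+1)).factorial) := by ring
    have habs : |c n * d ^ n| ≤ d ^ (n+1) * S₀ := by
      have h1 : |-(c n * d ^ n)| ≤ ∑' k : ℕ, d ^ (n+1) * (K * C ^ (k + (n+1)) / (k + (n+1)).factorial) := by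
        rw [← htail.tsum_eq]
        refine (norm_tsum_le_tsum_norm htail.summable.norm).trans ?_
        apply Summable.tsum_le_tsum (fun k => by simpa [Real.norm_eq_abs, abs_mul] using hbd k) htail.summable.norm
          (hsum.mul_left _)
      rwa [abs_neg, tsum_mul_left] at h1
    have hdn : 0 < d ^ n := pow_pos hd n
    rw [abs_mul, abs_pow, abs_of_pos hd] at habs
    have : |c n| * d ^ n ≤ (d * S₀) * d ^ n := by
      calc |c n| * d ^ n ≤ d ^ (n+1) * S₀ := habs
      _ = (d * S₀) * d ^ n := by ring
    exact le_of_mul_le_mul_right this hdn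
  by_contra hc
  have hpos : 0 < |c n| := abs_pos.mpr hc
  set d := min 1 (|c n| / (2 * (S₀ + 1))) with hd
  have hd0 : 0 < d := lt_min one_pos (by positivity)
  have hd1 : d ≤ 1 := min_le_left _ _
  have h2 := key d hd0 hd1
  have h3 : d * S₀ < |c n| := by
    have hdle : d ≤ |c n| / (2 * (S₀ + 1)) := min_le_right _ _
    have : d * S₀ ≤ (|c n| / (2 * (S₀ + 1))) * S₀ :=
      mul_le_mul_of_nonneg_right hdle hS₀nonneg
    calc d * S₀ ≤ (|c n| / (2 * (S₀ + 1))) * S₀ := this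
      _ < |c n| := by
          rw [div_mul_eq_mul_div, div_lt_iff₀ (by positivity)]
          nlinarith [hS₀nonneg, hpos]
  linarith

end Aux2
noncomputable section Aux3
open Matrix MeasureTheory

def Mn (n : ℕ) (D : Mat3) : ℝ := ∫ R, (q D R) ^ n ∂μSO3

lemma q_bound (D : Mat3) : ∃ C : ℝ, 0 ≤ C ∧ ∀ R, |q D R| ≤ C := by
  obtain ⟨C, hC⟩ := isCompact_univ.exists_bound_of_continuousOn (continuous_q D).continuousOn
  exact ⟨max C 0, le_max_right _ _, fun R =>
    le_trans (by simpa using hC R (Set.mem_univ R)) (le_max_left _ _)⟩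

lemma hasSum_Sbar (D : Mat3) {C : ℝ} (hC : ∀ R, |q D R| ≤ C) {d : ℝ} (hd : 0 ≤ d) :
    HasSum (fun n => (-d) ^ n / n.factorial * Mn n D) (Sbar D (dg d 0 0)) := by
  have hC0 : 0 ≤ C := le_trans (abs_nonneg _) (hC 1)
  have h1 : Sbar D (dg d 0 0) = ∫ R, ∑' n : ℕ, (-(d * q D R)) ^ n / n.factorial ∂μSO3 := by
    unfold Sbar
    congr 1
    ext R
    rw [trace_eq, Real.exp_eq_exp_ℝ, NormedSpace.exp_eq_tsum_div]
  have hFcont : ∀ n : ℕ, Continuous (fun R : SO3 => (-(d * q D R)) ^ n / n.factorial) := by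
    intro n
    exact ((continuous_const.mul (continuous_q D)).neg.pow n).div_const _
  have hFint : ∀ n : ℕ, Integrable (fun R : SO3 => (-(d * q D R)) ^ n / n.factorial) μSO3 :=
    fun n => integrable_cont (hFcont n)
  have hbound : ∀ (n : ℕ) (R : SO3), ‖(-(d * q D R)) ^ n / n.factorial‖
      ≤ (d * C) ^ n / n.factorial := by
    intro n R
    rw [norm_div, norm_pow, norm_neg, Real.norm_eq_abs, Real.norm_natCast]
    apply div_le_div_of_nonneg_right ?_ (Nat.cast_nonneg _)
    apply pow_le_pow_left₀ (abs_nonneg _)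
    rw [abs_mul, abs_of_nonneg hd]
    exact mul_le_mul_of_nonneg_left (hC R) hd
  have hintnorm : ∀ n : ℕ, ∫ R, ‖(-(d * q D R)) ^ n / n.factorial‖ ∂μSO3
      ≤ (d * C) ^ n / n.factorial := by
    intro n
    calc ∫ R, ‖(-(d * q D R)) ^ n / n.factorial‖ ∂μSO3
        ≤ ∫ _ : SO3, (d * C) ^ n / n.factorial ∂μSO3 :=
          integral_mono (hFint n).norm (integrable_const _) (hbound n)
      _ = (d * C) ^ n / n.factorial := by simp
  have hsummable : Summable (fun n : ℕ => ∫ R, ‖(-(d * q D R)) ^ n / n.factorial‖ ∂μSO3) := by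
    apply Summable.of_nonneg_of_le (fun n => integral_nonneg fun R => norm_nonneg _) hintnorm
    exact Real.summable_pow_div_factorial (d * C)
  have hmain := hasSum_integral_of_summable_integral_norm (μ := μSO3) hFint hsummable
  rw [← h1] at hmain
  convert hmain using 2 with n
  · rfl
  rw [Mn, ← integral_const_mul]
  congr 1
  ext R
  rw [div_mul_eq_mul_div]
  congr 1
  rw [← mul_pow]
  ring_nf

lemma moments_eq (D₁ D₂ : Mat3)
    (h : ∀ d : ℝ, 0 ≤ d → Sbar D₁ (dg d 0 0) = Sbar D₂ (dg d 0 0)) :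
    ∀ n, Mn n D₁ = Mn n D₂ := by
  obtain ⟨C₁, hC₁0, hC₁⟩ := q_bound D₁
  obtain ⟨C₂, hC₂0, hC₂⟩ := q_bound D₂
  set C := max C₁ C₂ with hCdef
  have hC₁' : ∀ R, |q D₁ R| ≤ C := fun R => (hC₁ R).trans (le_max_left _ _)
  have hC₂' : ∀ R, |q D₂ R| ≤ C := fun R => (hC₂ R).trans (le_max_right _ _)
  have hC0 : 0 ≤ C := hC₁0.trans (le_max_left _ _)
  set c : ℕ → ℝ := fun n => (-1) ^ n / n.factorial * (Mn n D₁ - Mn n D₂) with hc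
  have hMbound : ∀ (D : Mat3), (∀ R, |q D R| ≤ C) → ∀ n, |Mn n D| ≤ C ^ n := by
    intro D hCD n
    rw [Mn]
    calc |∫ R, (q D R) ^ n ∂μSO3| ≤ ∫ R, |(q D R) ^ n| ∂μSO3 := by
          simpa [Real.norm_eq_abs] using
            norm_integral_le_integral_norm (μ := μSO3) (fun R => (q D R) ^ n)
      _ ≤ ∫ _ : SO3, C ^ n ∂μSO3 := by
          apply integral_mono (integrable_cont ((continuous_q D).pow n)).abs
            (integrable_const _)
          intro R
          simp only [Pi.pow_apply, abs_pow]
          exact pow_le_pow_left₀ (abs_nonneg _) (hCD R) n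
      _ = C ^ n := by simp
  have hcb : ∀ n, |c n| ≤ 2 * C ^ n / n.factorial := by
    intro n
    rw [hc]
    simp only []
    rw [abs_mul, abs_div, abs_pow, abs_neg, abs_one, one_pow, Nat.abs_cast]
    rw [div_mul_eq_mul_div, one_mul]
    apply div_le_div_of_nonneg_right ?_ (Nat.cast_nonneg _)
    calc |Mn n D₁ - Mn n D₂| ≤ |Mn n D₁| + |Mn n D₂| := abs_sub _ _
      _ ≤ C ^ n + C ^ n := add_le_add (hMbound D₁ hC₁' n) (hMbound D₂ hC₂' n)
      _ = 2 * C ^ n := by ring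
  have hhs : ∀ d : ℝ, 0 < d → d ≤ 1 → HasSum (fun n => c n * d ^ n) 0 := by
    intro d hd0 hd1
    have h1 := hasSum_Sbar D₁ hC₁' hd0.le
    have h2 := hasSum_Sbar D₂ hC₂' hd0.le
    have h3 := h1.sub h2
    rw [h d hd0.le, sub_self] at h3
    convert h3 using 2 with n
    · rfl
    rw [hc]
    simp only []
    rw [neg_pow, neg_pow]
    ring
  have := coeffs_zero c 2 C (by norm_num) hC0 hcb hhs
  intro n
  have hn := this n
  rw [hc] at hn
  simp only [] at hn
  have hne : ((-1 : ℝ)) ^ n / n.factorial ≠ 0 := by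
    apply div_ne_zero
    · exact pow_ne_zero _ (by norm_num)
    · exact_mod_cast (Nat.factorial_pos n).ne'
  have := mul_eq_zero.mp hn
  rcases this with h' | h'
  · exact absurd h' hne
  · linarith [sub_eq_zero.mp h']

end Aux3
noncomputable section Aux4
open Matrix MeasureTheory

def mon (a b c : ℕ) (R : SO3) : ℝ := (ucol R 0)^a * (ucol R 1)^b * (ucol R 2)^c

lemma continuous_mon (a b c : ℕ) : Continuous (mon a b c) :=
  (((continuous_col_i 0).pow a).mul ((continuous_col_i 1).pow b)).mul ((continuous_col_i 2).pow c)

lemma int_mon (a b c : ℕ) : Integrable (mon a b c) μSO3 := integrable_cont (continuous_mon a b c)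

def J (a b c : ℕ) : ℝ := ∫ R, mon a b c R ∂μSO3

lemma integral_eq_sum {k : ℕ} (f : SO3 → ℝ) (co : Fin k → ℝ) (e : Fin k → ℕ × ℕ × ℕ)
    (hf : ∀ R, f R = ∑ i, co i * mon (e i).1 (e i).2.1 (e i).2.2 R) :
    ∫ R, f R ∂μSO3 = ∑ i, co i * J (e i).1 (e i).2.1 (e i).2.2 := by
  have h1 : ∫ R, f R ∂μSO3 = ∫ R, ∑ i, co i * mon (e i).1 (e i).2.1 (e i).2.2 R ∂μSO3 := by
    congr 1; funext R; exact hf R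
  rw [h1, integral_finset_sum _ (fun i _ => (int_mon _ _ _).const_mul _)]
  exact Finset.sum_congr rfl fun i _ => integral_const_mul _ _

lemma J_subst (g : SO3) (a b c : ℕ) :
    J a b c = ∫ R, mon a b c (g * R) ∂μSO3 :=
  (integral_comp_smul g (mon a b c)).symm

def gP : SO3 := ⟨!![0,1,0; 0,0,1; 1,0,0], by
  constructor
  · ext i j
    fin_cases i <;> fin_cases j <;>
      simp [Matrix.mul_apply, Fin.sum_univ_three, Matrix.one_apply, Matrix.vecHead, Matrix.vecTail, Matrix.transpose_apply]
  · simp [Matrix.det_fin_three]⟩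

def gF : SO3 := ⟨!![1,0,0; 0,-1,0; 0,0,-1], by
  constructor
  · ext i j
    fin_cases i <;> fin_cases j <;>
      simp [Matrix.mul_apply, Fin.sum_univ_three, Matrix.one_apply, Matrix.vecHead, Matrix.vecTail, Matrix.transpose_apply]
  · simp [Matrix.det_fin_three]⟩

def g90 : SO3 := ⟨!![0,-1,0; 1,0,0; 0,0,1], by
  constructor
  · ext i j
    fin_cases i <;> fin_cases j <;>
      simp [Matrix.mul_apply, Fin.sum_univ_three, Matrix.one_apply, Matrix.vecHead, Matrix.vecTail, Matrix.transpose_apply]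
  · simp [Matrix.det_fin_three]⟩

def g35 : SO3 := ⟨!![3/5, 4/5, 0; -4/5, 3/5, 0; 0,0,1], by
  constructor
  · ext i j
    fin_cases i <;> fin_cases j <;>
      simp [Matrix.mul_apply, Fin.sum_univ_three, Matrix.one_apply, Matrix.vecHead, Matrix.vecTail, Matrix.transpose_apply] <;> norm_num
  · simp [Matrix.det_fin_three]; norm_num⟩

lemma ucol_gP (R : SO3) : ucol (gP * R) 0 = ucol R 1 ∧ ucol (gP * R) 1 = ucol R 2
    ∧ ucol (gP * R) 2 = ucol R 0 := by
  refine ⟨?_, ?_, ?_⟩ <;> rw [ucol_mul] <;> simp [gP, Matrix.vecHead, Matrix.vecTail]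

lemma ucol_gF (R : SO3) : ucol (gF * R) 0 = ucol R 0 ∧ ucol (gF * R) 1 = -ucol R 1
    ∧ ucol (gF * R) 2 = -ucol R 2 := by
  refine ⟨?_, ?_, ?_⟩ <;> rw [ucol_mul] <;> simp [gF, Matrix.vecHead, Matrix.vecTail]

lemma ucol_g90 (R : SO3) : ucol (g90 * R) 0 = -ucol R 1 ∧ ucol (g90 * R) 1 = ucol R 0
    ∧ ucol (g90 * R) 2 = ucol R 2 := by
  refine ⟨?_, ?_, ?_⟩ <;> rw [ucol_mul] <;> simp [g90, Matrix.vecHead, Matrix.vecTail]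

lemma ucol_g35 (R : SO3) : ucol (g35 * R) 0 = 3/5 * ucol R 0 + 4/5 * ucol R 1
    ∧ ucol (g35 * R) 1 = -(4/5) * ucol R 0 + 3/5 * ucol R 1
    ∧ ucol (g35 * R) 2 = ucol R 2 := by
  refine ⟨?_, ?_, ?_⟩ <;> rw [ucol_mul] <;> simp [g35, Matrix.vecHead, Matrix.vecTail] <;> ring

end Aux4
noncomputable section Aux5
set_option maxRecDepth 20000
open Matrix MeasureTheory

lemma J_zero_of_odd (a b c : ℕ) (h : Odd (b + c)) : J a b c = 0 := by
  have h1 : J a b c = ∫ R, mon a b c (gF * R) ∂μSO3 := J_subst gF a b c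
  have h2 : ∀ R : SO3, mon a b c (gF * R) = -mon a b c R := by
    intro R
    obtain ⟨e0, e1, e2⟩ := ucol_gF R
    have hodd : ((-1:ℝ))^(b+c) = -1 := Odd.neg_one_pow h
    calc mon a b c (gF * R) = (-1:ℝ)^(b+c) * mon a b c R := by
          simp only [mon, e0, e1, e2]
          rw [neg_pow (ucol R 1), neg_pow (ucol R 2), pow_add]
          ring
      _ = -mon a b c R := by rw [hodd, neg_one_mul]
  have h3 : ∫ R, mon a b c (gF * R) ∂μSO3 = ∫ R, -(mon a b c R) ∂μSO3 := by
    congr 1; funext R; exact h2 R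
  rw [h3, integral_neg] at h1
  have : J a b c = -J a b c := h1
  linarith

lemma J_swap (a b c : ℕ) : J a b c = (-1:ℝ)^a * J b a c := by
  have h1 : J a b c = ∫ R, mon a b c (g90 * R) ∂μSO3 := J_subst g90 a b c
  have h3 : ∫ R, mon a b c (g90 * R) ∂μSO3 = ∫ R, (-1:ℝ)^a * mon b a c R ∂μSO3 := by
    congr 1; funext R
    obtain ⟨e0, e1, e2⟩ := ucol_g90 R
    simp only [mon, e0, e1, e2]
    rw [neg_pow (ucol R 1)]
    ring
  rw [h3, integral_const_mul] at h1
  exact h1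

lemma J_cyc (a b c : ℕ) : J a b c = J c a b := by
  have h1 : J a b c = ∫ R, mon a b c (gP * R) ∂μSO3 := J_subst gP a b c
  have h3 : ∫ R, mon a b c (gP * R) ∂μSO3 = ∫ R, mon c a b R ∂μSO3 := by
    congr 1; funext R
    obtain ⟨e0, e1, e2⟩ := ucol_gP R
    simp only [mon, e0, e1, e2]; ring
  rw [h3] at h1
  exact h1

lemma Jn1 : J 2 0 0 + J 0 2 0 + J 0 0 2 = 1 := by
  have h := integral_eq_sum (fun _ : SO3 => (1:ℝ)) ![1,1,1] ![(2,0,0),(0,2,0),(0,0,2)]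
    (fun R => by
      simp [Fin.sum_univ_three, mon]
      linarith [col_norm R])
  simp [Fin.sum_univ_three, measure_univ] at h
  linarith

lemma Jn2 : J 4 0 0 + J 0 4 0 + J 0 0 4 + 2*J 2 2 0 + 2*J 2 0 2 + 2*J 0 2 2 = 1 := by
  have h := integral_eq_sum (fun _ : SO3 => (1:ℝ)) ![1,1,1,2,2,2]
    ![(4,0,0),(0,4,0),(0,0,4),(2,2,0),(2,0,2),(0,2,2)]
    (fun R => by
      simp [Fin.sum_univ_succ, mon]
      linear_combination (-(ucol R 0^2 + ucol R 1^2 + ucol R 2^2) - 1) * col_norm R)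
  simp [Fin.sum_univ_succ, measure_univ] at h
  linarith

lemma Jn3 : J 6 0 0 + J 0 6 0 + J 0 0 6 + 3*J 4 2 0 + 3*J 4 0 2 + 3*J 2 4 0
    + 3*J 0 4 2 + 3*J 2 0 4 + 3*J 0 2 4 + 6*J 2 2 2 = 1 := by
  have h := integral_eq_sum (fun _ : SO3 => (1:ℝ)) ![1,1,1,3,3,3,3,3,3,6]
    ![(6,0,0),(0,6,0),(0,0,6),(4,2,0),(4,0,2),(2,4,0),(0,4,2),(2,0,4),(0,2,4),(2,2,2)]
    (fun R => by
      simp [Fin.sum_univ_succ, mon]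
      linear_combination (-((ucol R 0^2 + ucol R 1^2 + ucol R 2^2)^2
        + (ucol R 0^2 + ucol R 1^2 + ucol R 2^2) + 1)) * col_norm R)
  simp [Fin.sum_univ_succ, measure_univ] at h
  linarith

lemma Jrel4 : J 4 0 0 = (81/625)*J 4 0 0 + (432/625)*J 3 1 0 + (864/625)*J 2 2 0
    + (768/625)*J 1 3 0 + (256/625)*J 0 4 0 := by
  have h1 := J_subst g35 4 0 0
  have h := integral_eq_sum (fun R => mon 4 0 0 (g35 * R))
    ![81/625, 432/625, 864/625, 768/625, 256/625]
    ![(4,0,0),(3,1,0),(2,2,0),(1,3,0),(0,4,0)]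
    (fun R => by
      obtain ⟨e0, e1, e2⟩ := ucol_g35 R
      simp only [mon, e0, e1, e2]
      simp [Fin.sum_univ_succ, mon]
      ring)
  rw [← h1] at h
  simp [Fin.sum_univ_succ] at h
  linarith

lemma Jrel6 : J 6 0 0 = (729/15625)*J 6 0 0 + (5832/15625)*J 5 1 0 + (19440/15625)*J 4 2 0
    + (34560/15625)*J 3 3 0 + (34560/15625)*J 2 4 0 + (18432/15625)*J 1 5 0
    + (4096/15625)*J 0 6 0 := by
  have h1 := J_subst g35 6 0 0
  have h := integral_eq_sum (fun R => mon 6 0 0 (g35 * R))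
    ![729/15625, 5832/15625, 19440/15625, 34560/15625, 34560/15625, 18432/15625, 4096/15625]
    ![(6,0,0),(5,1,0),(4,2,0),(3,3,0),(2,4,0),(1,5,0),(0,6,0)]
    (fun R => by
      obtain ⟨e0, e1, e2⟩ := ucol_g35 R
      simp only [mon, e0, e1, e2]
      simp [Fin.sum_univ_succ, mon]
      ring)
  rw [← h1] at h
  simp [Fin.sum_univ_succ] at h
  linarith

lemma Jrel42 : J 4 0 2 = (81/625)*J 4 0 2 + (432/625)*J 3 1 2 + (864/625)*J 2 2 2
    + (768/625)*J 1 3 2 + (256/625)*J 0 4 2 := by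
  have h1 := J_subst g35 4 0 2
  have h := integral_eq_sum (fun R => mon 4 0 2 (g35 * R))
    ![81/625, 432/625, 864/625, 768/625, 256/625]
    ![(4,0,2),(3,1,2),(2,2,2),(1,3,2),(0,4,2)]
    (fun R => by
      obtain ⟨e0, e1, e2⟩ := ucol_g35 R
      simp only [mon, e0, e1, e2]
      simp [Fin.sum_univ_succ, mon]
      ring)
  rw [← h1] at h
  simp [Fin.sum_univ_succ] at h
  linarith

-- values
lemma J200 : J 2 0 0 = 1/3 ∧ J 0 2 0 = 1/3 ∧ J 0 0 2 = 1/3 := by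
  have c1 := J_cyc 2 0 0
  have c2 := J_cyc 0 2 0
  have n := Jn1
  refine ⟨by linarith, by linarith, by linarith⟩

lemma J4 : J 4 0 0 = 1/5 ∧ J 0 4 0 = 1/5 ∧ J 0 0 4 = 1/5
    ∧ J 2 2 0 = 1/15 ∧ J 2 0 2 = 1/15 ∧ J 0 2 2 = 1/15 := by
  have c1 := J_cyc 4 0 0
  have c2 := J_cyc 0 4 0
  have c3 := J_cyc 2 2 0
  have c4 := J_cyc 0 2 2
  have z1 : J 3 1 0 = 0 := J_zero_of_odd 3 1 0 (by decide)
  have z2 : J 1 3 0 = 0 := J_zero_of_odd 1 3 0 (by decide)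
  have r := Jrel4
  have n := Jn2
  refine ⟨by linarith, by linarith, by linarith, by linarith, by linarith, by linarith⟩

lemma J6 : J 6 0 0 = 1/7 ∧ J 0 6 0 = 1/7 ∧ J 0 0 6 = 1/7
    ∧ J 4 2 0 = 1/35 ∧ J 4 0 2 = 1/35 ∧ J 2 4 0 = 1/35
    ∧ J 0 4 2 = 1/35 ∧ J 2 0 4 = 1/35 ∧ J 0 2 4 = 1/35
    ∧ J 2 2 2 = 1/105 := by
  have c1 := J_cyc 6 0 0
  have c2 := J_cyc 0 6 0
  have c3 := J_cyc 4 2 0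
  have c4 := J_cyc 0 4 2
  have c5 := J_cyc 2 0 4
  have c6 := J_cyc 2 4 0
  have c7 := J_cyc 0 2 4
  have s1 : J 2 4 0 = J 4 2 0 := by simpa using J_swap 2 4 0
  have z1 : J 5 1 0 = 0 := J_zero_of_odd 5 1 0 (by decide)
  have z2 : J 3 3 0 = 0 := J_zero_of_odd 3 3 0 (by decide)
  have z3 : J 1 5 0 = 0 := J_zero_of_odd 1 5 0 (by decide)
  have z4 : J 3 1 2 = 0 := J_zero_of_odd 3 1 2 (by decide)
  have z5 : J 1 3 2 = 0 := J_zero_of_odd 1 3 2 (by decide)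
  have r1 := Jrel6
  have r2 := Jrel42
  have n := Jn3
  refine ⟨by linarith, by linarith, by linarith, by linarith, by linarith, by linarith,
    by linarith, by linarith, by linarith, by linarith⟩

end Aux5
noncomputable section Aux6
open Matrix MeasureTheory Polynomial
set_option maxRecDepth 20000

lemma q_dg (a b c : ℝ) (R : SO3) :
    q (dg a b c) R = a * (ucol R 0)^2 + b * (ucol R 1)^2 + c * (ucol R 2)^2 := by
  simp [q, dg, Matrix.diagonal_apply, Fin.sum_univ_three]
  ring

lemma Mn1_dg (a b c : ℝ) : Mn 1 (dg a b c) = (a + b + c)/3 := by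
  have h := integral_eq_sum (fun R => (q (dg a b c) R)^1) ![a,b,c]
    ![(2,0,0),(0,2,0),(0,0,2)]
    (fun R => by simp only [pow_one, q_dg]; simp [Fin.sum_univ_three, mon])
  rw [Mn, h]
  obtain ⟨v1, v2, v3⟩ := J200
  simp [Fin.sum_univ_three, v1, v2, v3]
  ring

lemma Mn2_dg (a b c : ℝ) : Mn 2 (dg a b c) =
    (a^2 + b^2 + c^2)/5 + 2*(a*b + a*c + b*c)/15 := by
  have h := integral_eq_sum (fun R => (q (dg a b c) R)^2) ![a^2,b^2,c^2,2*a*b,2*a*c,2*b*c]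
    ![(4,0,0),(0,4,0),(0,0,4),(2,2,0),(2,0,2),(0,2,2)]
    (fun R => by simp only [q_dg]; simp [Fin.sum_univ_succ, mon]; ring)
  rw [Mn, h]
  obtain ⟨v1, v2, v3, v4, v5, v6⟩ := J4
  simp [Fin.sum_univ_succ, v1, v2, v3, v4, v5, v6]
  ring

lemma Mn3_dg (a b c : ℝ) : Mn 3 (dg a b c) =
    (a^3 + b^3 + c^3)/7 + 3*(a^2*b + a^2*c + a*b^2 + b^2*c + a*c^2 + b*c^2)/35
      + 2*(a*b*c)/35 := by
  have h := integral_eq_sum (fun R => (q (dg a b c) R)^3)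
    ![a^3, b^3, c^3, 3*a^2*b, 3*a^2*c, 3*a*b^2, 3*b^2*c, 3*a*c^2, 3*b*c^2, 6*a*b*c]
    ![(6,0,0),(0,6,0),(0,0,6),(4,2,0),(4,0,2),(2,4,0),(0,4,2),(2,0,4),(0,2,4),(2,2,2)]
    (fun R => by simp only [q_dg]; simp [Fin.sum_univ_succ, mon]; ring)
  rw [Mn, h]
  obtain ⟨w1, w2, w3, w4, w5, w6, w7, w8, w9, w10⟩ := J6
  simp [Fin.sum_univ_succ, w1, w2, w3, w4, w5, w6, w7, w8, w9, w10]
  ring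

lemma q_conj (D : Mat3) (g R : SO3) : q D (g * R) = q (g.1ᵀ * D * g.1) R := by
  simp [q, ucol_mul, Matrix.mul_apply, Fin.sum_univ_three, Matrix.transpose_apply]
  ring

lemma Mn_conj (D : Mat3) (g : SO3) (n : ℕ) : Mn n (g.1ᵀ * D * g.1) = Mn n D := by
  rw [Mn, Mn, ← integral_comp_smul g (fun R => (q D R)^n)]
  congr 1
  funext R
  rw [q_conj]

lemma charpoly_conj (U D : Mat3) (hU : Uᵀ * U = 1) : (Uᵀ * D * U).charpoly = D.charpoly := by
  have hmap : (Uᵀ.map C) * (U.map C) = 1 := by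
    rw [← Matrix.map_mul, hU]
    simp
  have hcm : charmatrix (Uᵀ * D * U) = (Uᵀ.map C) * charmatrix D * (U.map C) := by
    rw [charmatrix, charmatrix]
    have h1 : ((C : ℝ →+* ℝ[X]).mapMatrix (Uᵀ * D * U) : Matrix (Fin 3) (Fin 3) ℝ[X])
        = (Uᵀ.map C) * ((C : ℝ →+* ℝ[X]).mapMatrix D) * (U.map C) := by
      simp only [RingHom.mapMatrix_apply, Matrix.map_mul]
    rw [h1, Matrix.mul_sub, Matrix.sub_mul]
    congr 1
    have h2 : (Uᵀ.map C) * (Matrix.scalar (Fin 3) (X : ℝ[X])) = (Matrix.scalar (Fin 3) (X : ℝ[X])) * (Uᵀ.map C) :=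
      (Matrix.scalar_commute (X : ℝ[X]) (fun r => Commute.all _ _) _).symm
    rw [h2, Matrix.mul_assoc, hmap, Matrix.mul_one]
  rw [Matrix.charpoly, Matrix.charpoly, hcm, Matrix.det_mul, Matrix.det_mul]
  have : (Uᵀ.map C).det * (U.map C).det = 1 := by
    rw [← Matrix.det_mul, hmap, Matrix.det_one]
  calc (Uᵀ.map C).det * (charmatrix D).det * (U.map C).det
      = ((Uᵀ.map C).det * (U.map C).det) * (charmatrix D).det := by ring
    _ = (charmatrix D).det := by rw [this, one_mul]

lemma charpoly_dg (a b c : ℝ) : (dg a b c).charpoly =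
    X^3 - C (a+b+c) * X^2 + C (a*b+a*c+b*c) * X - C (a*b*c) := by
  rw [Matrix.charpoly, Matrix.det_fin_three]
  simp [charmatrix_apply, dg, Matrix.diagonal_apply, map_add, _root_.map_mul]
  ring

lemma exists_so3_diag (D : Mat3) (hD : D.PosSemidef) :
    ∃ (g : SO3) (a b c : ℝ), g.1ᵀ * D * g.1 = dg a b c := by
  have hH : D.IsHermitian := hD.1
  set U : Mat3 := (hH.eigenvectorUnitary : Mat3) with hUdef
  have hUmem := (hH.eigenvectorUnitary).2
  have hUU : Uᵀ * U = 1 := by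
    have := hUmem.1
    rwa [Matrix.star_eq_conjTranspose, Matrix.conjTranspose_eq_transpose_of_trivial] at this
  have hUU' : U * Uᵀ = 1 := by
    rw [mul_eq_one_comm] at hUU
    exact hUU
  set ev : Fin 3 → ℝ := hH.eigenvalues with hev
  have hspec : D = U * Matrix.diagonal ev * Uᵀ := by
    have := hH.spectral_theorem
    rw [Unitary.conjStarAlgAut_apply] at this
    rwa [Matrix.star_eq_conjTranspose, Matrix.conjTranspose_eq_transpose_of_trivial,
      RCLike.ofReal_real_eq_id, Function.id_comp] at this
  have hdiag : Uᵀ * D * U = Matrix.diagonal ev := by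
    rw [hspec]
    rw [show Uᵀ * (U * Matrix.diagonal ev * Uᵀ) * U
        = (Uᵀ * U) * Matrix.diagonal ev * (Uᵀ * U) by noncomm_ring, hUU]
    simp
  have hveq : Matrix.diagonal ev = dg (ev 0) (ev 1) (ev 2) := by
    rw [dg]
    congr 1
    funext i
    fin_cases i <;> rfl
  have hdet : U.det = 1 ∨ U.det = -1 := by
    have h1 : U.det * U.det = 1 := by
      have := congrArg Matrix.det hUU
      rwa [Matrix.det_mul, Matrix.det_transpose, Matrix.det_one] at this
    rcases mul_self_eq_one_iff.mp h1 with h | h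
    · exact Or.inl h
    · exact Or.inr h
  rcases hdet with h | h
  · exact ⟨⟨U, hUU, h⟩, ev 0, ev 1, ev 2, by rw [← hveq]; exact hdiag⟩
  · set F : Mat3 := Matrix.diagonal ![-1, 1, 1] with hF
    have hFF : F * F = 1 := by
      rw [hF, Matrix.diagonal_mul_diagonal]
      ext i j
      fin_cases i <;> fin_cases j <;>
        simp [Matrix.diagonal_apply, Matrix.one_apply] <;> norm_num
    have hFt : Fᵀ = F := Matrix.diagonal_transpose _
    have hFdet : F.det = -1 := by
      rw [hF, Matrix.det_diagonal]
      simp [Fin.prod_univ_three]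
    refine ⟨⟨U * F, ?_, ?_⟩, ev 0, ev 1, ev 2, ?_⟩
    · rw [Matrix.transpose_mul, hFt,
        show F * Uᵀ * (U * F) = F * (Uᵀ * U) * F by noncomm_ring, hUU,
        Matrix.mul_one]
      exact hFF
    · rw [Matrix.det_mul, h, hFdet]
      norm_num
    · show (U * F)ᵀ * D * (U * F) = dg (ev 0) (ev 1) (ev 2)
      rw [Matrix.transpose_mul, hFt,
        show F * Uᵀ * D * (U * F) = F * (Uᵀ * D * U) * F by noncomm_ring, hdiag, hF,
        Matrix.diagonal_mul_diagonal, Matrix.diagonal_mul_diagonal, dg]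
      ext i j
      fin_cases i <;> fin_cases j <;>
        simp [Matrix.diagonal_apply, Matrix.vecHead, Matrix.vecTail] <;> ring

end Aux6
/-- if the orientationally-averaged signals of two positive semi-definite tensors
agree for all rank-1 measurement tensors `diag(d,0,0)`, `d ≥ 0`, then the tensors have the same
characteristic polynomial (same eigenvalues with multiplicity). -/
theorem stmt_16 (D₁ D₂ : Mat3) (h₁ : D₁.PosSemidef) (h₂ : D₂.PosSemidef)
    (h : ∀ d : ℝ, 0 ≤ d → Sbar D₁ (dg d 0 0) = Sbar D₂ (dg d 0 0)) :
    D₁.charpoly = D₂.charpoly := by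
  have hM := moments_eq D₁ D₂ h
  obtain ⟨g₁, a1, b1, c1, hg1⟩ := exists_so3_diag D₁ h₁
  obtain ⟨g₂, a2, b2, c2, hg2⟩ := exists_so3_diag D₂ h₂
  have hc1 : D₁.charpoly = (dg a1 b1 c1).charpoly := by
    rw [← hg1]; exact (charpoly_conj g₁.1 D₁ g₁.2.1).symm
  have hc2 : D₂.charpoly = (dg a2 b2 c2).charpoly := by
    rw [← hg2]; exact (charpoly_conj g₂.1 D₂ g₂.2.1).symm
  have hMn : ∀ n, Mn n (dg a1 b1 c1) = Mn n (dg a2 b2 c2) := by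
    intro n
    rw [← hg1, ← hg2, Mn_conj, Mn_conj]
    exact hM n
  have h1' := hMn 1
  rw [Mn1_dg, Mn1_dg] at h1'
  have h2' := hMn 2
  rw [Mn2_dg, Mn2_dg] at h2'
  have h3' := hMn 3
  rw [Mn3_dg, Mn3_dg] at h3'
  have hE1 : a1 + b1 + c1 = a2 + b2 + c2 := by linarith
  have hE2 : a1*b1 + a1*c1 + b1*c1 = a2*b2 + a2*c2 + b2*c2 := by
    linear_combination (3/4)*(a1+b1+c1+a2+b2+c2)*hE1 - (15/4)*h2'
  have hE3 : a1*b1*c1 = a2*b2*c2 := by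
    linear_combination (35/8)*h3'
      + (-(5/8)*((a1+b1+c1)^2+(a1+b1+c1)*(a2+b2+c2)+(a2+b2+c2)^2)
          + (3/2)*(a1*b1+a1*c1+b1*c1))*hE1
      + (3/2)*(a2+b2+c2)*hE2
  rw [hc1, hc2, charpoly_dg, charpoly_dg, hE1, hE2, hE3]
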